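/- (Identifiability, Theorem 3.) Fix integers m, n, k with 1 ≤ k < min{m, n}. For Lebesgue-almost-every parameter tuple (ζ, (ξ_i)_{i ∈ Fin k}, (η_{i,j})_{(i,j) ∈ Fin k × Fin m}) in the triangle-graph parameter space, the resulting pmf p on Fin m × Fin n admits no conditionally independent extension with latent cardinality k: there is no function q : Fin m → Fin n → Fin k → ℝ with q x y z ≥ 0 for all x, y, z, ∑_z q x y z = p(x, y) for all x, y, and q x y z · (∑_{x',y'} q x' y' z) = (∑_{y'} q x y' z) · (∑_{x'} q x' y z) for all x, y, z. Equivalently, when the distribution of Z and the conditionals P(X|z) and P(Y|x,z) are sampled independently and uniformly from the appropriate probability simplices, then with probability 1 no joint distribution q(x,y,z) has marginal p(x,y) and makes X and Y conditionally independent given Z. -/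

import Mathlib

open Finset MeasureTheory

/-- The parametrized simplex `Δ_{n-1} ⊆ ℝ^{n-1}`:
`{a | a_j ≥ 0 for all j, ∑ j, a j ≤ 1}`. -/
def simplexParam (n : ℕ) : Set (Fin (n - 1) → ℝ) :=
  {a | (∀ j, 0 ≤ a j) ∧ ∑ j, a j ≤ 1}

/-- The lift `φ_n : ℝ^{n-1} → ℝⁿ`, `φ_n(a) = (a_1, …, a_{n-1}, 1 - ∑ j, a j)`, which maps
`Δ_{n-1}` onto the standard probability simplex in `ℝⁿ`. -/
noncomputable def liftSimplex (n : ℕ) (a : Fin (n - 1) → ℝ) : Fin n → ℝ :=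
  fun i => if h : (i : ℕ) < n - 1 then a ⟨i, h⟩ else 1 - ∑ j, a j

/-- The triangle-graph parameter space: `ζ ∈ Δ_{k-1}` parametrizes `P(Z)`, each `ξ i ∈ Δ_{m-1}`
parametrizes `P(X | Z = i)`, and each `η i j ∈ Δ_{n-1}` parametrizes `P(Y | Z = i, X = j)`. -/
def InTriangleParams (m n k : ℕ)
    (θ : (Fin (k - 1) → ℝ) × (Fin k → Fin (m - 1) → ℝ) ×
      (Fin k → Fin m → Fin (n - 1) → ℝ)) : Prop :=
  θ.1 ∈ simplexParam k ∧ (∀ i, θ.2.1 i ∈ simplexParam m) ∧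
    ∀ i j, θ.2.2 i j ∈ simplexParam n

/-- The joint pmf of `(X, Y)` generated by the triangle causal graph
`Z → X`, `Z → Y`, `X → Y`:
`p(x, y) = ∑ i, P(Z = i) P(X = x | Z = i) P(Y = y | Z = i, X = x)`. -/
noncomputable def trianglePMF (m n k : ℕ)
    (θ : (Fin (k - 1) → ℝ) × (Fin k → Fin (m - 1) → ℝ) ×
      (Fin k → Fin m → Fin (n - 1) → ℝ)) (x : Fin m) (y : Fin n) : ℝ :=
  ∑ i, liftSimplex k θ.1 i * liftSimplex m (θ.2.1 i) x * liftSimplex n (θ.2.2 i x) y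

/-- A conditionally independent extension of `p` with latent cardinality `k`. -/
def IsCIExtension {m n k : ℕ} (p : Fin m → Fin n → ℝ)
    (q : Fin m → Fin n → Fin k → ℝ) : Prop :=
  (∀ x y z, 0 ≤ q x y z) ∧
  (∀ x y, ∑ z, q x y z = p x y) ∧
  (∀ x y z, q x y z * (∑ x', ∑ y', q x' y' z) =
    (∑ y', q x y' z) * (∑ x', q x' y z))


section AuxHelpers
open Set

lemma measurable_mveval {ι : Type*} (p : MvPolynomial ι ℝ) :
    Measurable fun x : ι → ℝ => MvPolynomial.eval x p := by
  have : (fun x : ι → ℝ => MvPolynomial.eval x p) =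
      fun x => ∑ d ∈ p.support, p.coeff d * ∏ i ∈ d.support, x i ^ d i := by
    funext x; rw [MvPolynomial.eval_eq]
  rw [this]
  exact Finset.measurable_sum _ fun d _ => (measurable_const.mul
    (Finset.measurable_prod _ fun i _ => (measurable_pi_apply i).pow_const _))

lemma mvpoly_zero_null : ∀ (d : ℕ) (p : MvPolynomial (Fin d) ℝ), p ≠ 0 →
    volume {x : Fin d → ℝ | MvPolynomial.eval x p = 0} = 0 := by
  intro d
  induction d with
  | zero =>
    intro p hp
    obtain ⟨c, rfl⟩ := MvPolynomial.C_surjective (Fin 0) p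
    have hc : c ≠ 0 := fun h => hp (by rw [h, map_zero])
    have : {x : Fin 0 → ℝ | MvPolynomial.eval x (MvPolynomial.C c) = 0} = ∅ := by
      ext x; simp [hc]
    rw [this]; exact measure_empty
  | succ d ih =>
    intro p hp
    set q : Polynomial (MvPolynomial (Fin d) ℝ) := MvPolynomial.finSuccEquiv ℝ d p with hqdef
    have hq0 : q ≠ 0 := by
      simp only [hqdef, ne_eq, EmbeddingLike.map_eq_zero_iff]
      exact hp
    have hlead : q.leadingCoeff ≠ 0 := Polynomial.leadingCoeff_ne_zero.mpr hq0
    -- the set in product form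
    set A : Set ((Fin d → ℝ) × ℝ) :=
      {z | Polynomial.eval z.2 (Polynomial.map (MvPolynomial.eval z.1) q) = 0} with hA
    have hGmeas : Measurable fun z : (Fin d → ℝ) × ℝ =>
        Polynomial.eval z.2 (Polynomial.map (MvPolynomial.eval z.1) q) := by
      have hrw : (fun z : (Fin d → ℝ) × ℝ =>
          Polynomial.eval z.2 (Polynomial.map (MvPolynomial.eval z.1) q)) =
          fun z => ∑ i ∈ Finset.range (q.natDegree + 1),
            MvPolynomial.eval z.1 (q.coeff i) * z.2 ^ i := by
        funext z
        rw [Polynomial.eval_eq_sum_range' (lt_of_le_of_lt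
          Polynomial.natDegree_map_le (Nat.lt_succ_self _))]
        exact Finset.sum_congr rfl fun i _ => by rw [Polynomial.coeff_map]
      rw [hrw]
      exact Finset.measurable_sum _ fun i _ =>
        ((measurable_mveval _).comp measurable_fst).mul (measurable_snd.pow_const i)
    have hAmeas : MeasurableSet A := hGmeas (measurableSet_singleton 0)
    have hAnull : (volume.prod volume) A = 0 := by
      rw [Measure.measure_prod_null hAmeas]
      have h1 : volume {s : Fin d → ℝ | MvPolynomial.eval s q.leadingCoeff = 0} = 0 :=
        ih _ hlead
      filter_upwards [(compl_mem_ae_iff).2 h1] with s hs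
      simp only [Set.mem_compl_iff, Set.mem_setOf_eq] at hs
      have hmapne : Polynomial.map (MvPolynomial.eval s) q ≠ 0 := by
        intro h
        apply hs
        have h2 : (Polynomial.map (MvPolynomial.eval s) q).coeff q.natDegree =
            MvPolynomial.eval s (q.coeff q.natDegree) := Polynomial.coeff_map _ _
        rw [h, Polynomial.coeff_zero] at h2
        simp only [Polynomial.leadingCoeff]
        exact h2.symm
      have : (Prod.mk s ⁻¹' A) = {t : ℝ | (Polynomial.map (MvPolynomial.eval s) q).IsRoot t} := rfl
      rw [this]
      exact Set.Finite.measure_zero (Polynomial.finite_setOf_isRoot hmapne) volume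
    -- transfer via piFinSuccAbove and swap
    have e := MeasurableEquiv.piFinSuccAbove (fun _ : Fin (d + 1) => ℝ) 0
    have hme : MeasurePreserving (MeasurableEquiv.piFinSuccAbove (fun _ : Fin (d + 1) => ℝ) 0)
        volume ((volume : Measure ℝ).prod (volume : Measure (Fin d → ℝ))) :=
      measurePreserving_piFinSuccAbove (fun _ => volume) 0
    have hswap : MeasurePreserving (Prod.swap : ℝ × (Fin d → ℝ) → (Fin d → ℝ) × ℝ)
        ((volume : Measure ℝ).prod volume) ((volume : Measure (Fin d → ℝ)).prod volume) :=
      Measure.measurePreserving_swap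
    have hsub : {x : Fin (d+1) → ℝ | MvPolynomial.eval x p = 0} =
        (MeasurableEquiv.piFinSuccAbove (fun _ : Fin (d + 1) => ℝ) 0) ⁻¹'
          (Prod.swap ⁻¹' A) := by
      ext y
      have hey : (MeasurableEquiv.piFinSuccAbove (fun _ : Fin (d + 1) => ℝ) 0) y
          = (y 0, Fin.tail y) := by
        simp [MeasurableEquiv.piFinSuccAbove, Fin.removeNth_zero]
      simp only [Set.mem_setOf_eq, Set.mem_preimage, hey, Prod.swap, hA]
      have hkey := MvPolynomial.eval_eq_eval_mv_eval' (Fin.tail y) (y 0) p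
      rw [← hqdef, Fin.cons_self_tail] at hkey
      rw [hkey]
    rw [hsub]
    rw [hme.measure_preimage]
    · rw [hswap.measure_preimage]
      · exact hAnull
      · exact (hAmeas.nullMeasurableSet)
    · exact ((hAmeas.preimage measurable_swap).nullMeasurableSet)

lemma mvpoly_zero_null_fintype {ι : Type*} [Fintype ι] (p : MvPolynomial ι ℝ) (hp : p ≠ 0) :
    volume {x : ι → ℝ | MvPolynomial.eval x p = 0} = 0 := by
  classical
  set d := Fintype.card ι
  set e : ι ≃ Fin d := Fintype.equivFin ι
  set q : MvPolynomial (Fin d) ℝ := MvPolynomial.rename e p with hq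
  have hq0 : q ≠ 0 := fun h => hp ((MvPolynomial.rename_injective (R := ℝ) e e.injective)
    (by rw [← hq, h, map_zero]))
  have hmp := volume_measurePreserving_piCongrLeft (fun _ : Fin d => ℝ) e
  have hset : {x : ι → ℝ | MvPolynomial.eval x p = 0} =
      (MeasurableEquiv.piCongrLeft (fun _ : Fin d => ℝ) e) ⁻¹'
        {y : Fin d → ℝ | MvPolynomial.eval y q = 0} := by
    ext x
    simp only [Set.mem_setOf_eq, Set.mem_preimage, MeasurableEquiv.coe_piCongrLeft, hq,
      MvPolynomial.eval_rename]
    have hcomp : (Equiv.piCongrLeft (fun _ : Fin d => ℝ) e) x ∘ e = x := by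
      funext i
      exact Equiv.piCongrLeft_apply_apply (fun _ : Fin d => ℝ) e x i
    rw [hcomp]
  rw [hset, hmp.measure_preimage]
  · exact mvpoly_zero_null d q hq0
  · exact ((measurable_mveval q) (measurableSet_singleton 0)).nullMeasurableSet


/-- curry is measure preserving -/
lemma measurePreserving_curry' (γ β E : Type*) [Fintype γ] [Fintype β] [MeasurableSpace E]
    (μ : Measure E) [SigmaFinite μ] :
    MeasurePreserving (fun (f : γ × β → E) (a : γ) (b : β) => f (a, b))
      (Measure.pi fun _ => μ) (Measure.pi fun _ => Measure.pi fun _ => μ) := by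
  classical
  have hmeas : Measurable (fun (f : γ × β → E) (a : γ) (b : β) => f (a, b)) :=
    measurable_pi_lambda _ fun a => measurable_pi_lambda _ fun b => measurable_pi_apply (a, b)
  refine ⟨hmeas, ?_⟩
  refine (Measure.pi_eq_generateFrom (C := fun _ : γ => pi univ '' pi univ
      fun _ : β => {s : Set E | MeasurableSet s})
    (fun _ => generateFrom_pi) (fun _ => isPiSystem_pi)
    (fun _ => Measure.FiniteSpanningSetsIn.pi fun _ => μ.toFiniteSpanningSetsIn) ?_).symm
  intro s hs
  choose t ht hts using hs
  have hpre : (fun (f : γ × β → E) (a : γ) (b : β) => f (a, b)) ⁻¹' pi univ s =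
      pi univ fun p : γ × β => t p.1 p.2 := by
    ext f
    simp only [Set.mem_preimage, Set.mem_pi, Set.mem_univ, forall_true_left, Prod.forall]
    constructor
    · intro h a b
      have := h a
      rw [← hts a] at this
      exact this b (Set.mem_univ b)
    · intro h a
      rw [← hts a]
      intro b _
      exact h a b
  rw [Measure.map_apply hmeas (MeasurableSet.univ_pi fun a => by
    rw [← hts a]; exact MeasurableSet.univ_pi fun b => ht a b (Set.mem_univ b)), hpre,
    Measure.pi_pi, Fintype.prod_prod_type]
  refine Finset.prod_congr rfl fun a _ => ?_
  rw [← hts a, Measure.pi_pi]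

lemma measurePreserving_piCongrRight' {ι : Type*} [Fintype ι] {α β : ι → Type*}
    [∀ i, MeasurableSpace (α i)] [∀ i, MeasurableSpace (β i)]
    (e : ∀ i, α i → β i) (he : ∀ i, Measurable (e i))
    (μ : ∀ i, Measure (α i)) (ν : ∀ i, Measure (β i)) [∀ i, SigmaFinite (μ i)] [∀ i, SigmaFinite (ν i)]
    (h : ∀ i, MeasurePreserving (e i) (μ i) (ν i)) :
    MeasurePreserving (fun (f : ∀ i, α i) i => e i (f i)) (Measure.pi μ) (Measure.pi ν) := by
  have hmeas : Measurable (fun (f : ∀ i, α i) i => e i (f i)) :=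
    measurable_pi_lambda _ fun i => (he i).comp (measurable_pi_apply i)
  refine ⟨hmeas, ?_⟩
  refine (Measure.pi_eq fun s hs => ?_).symm
  have hpre : (fun (f : ∀ i, α i) i => e i (f i)) ⁻¹' pi univ s =
      pi univ fun i => e i ⁻¹' s i := by
    ext f; simp [Set.mem_pi]
  rw [Measure.map_apply hmeas (MeasurableSet.univ_pi hs), hpre, Measure.pi_pi]
  exact Finset.prod_congr rfl fun i _ => (h i).measure_preimage (hs i).nullMeasurableSet

lemma det_sum_rank_one {k : ℕ} (c : Fin (k + 1) → Fin k → ℝ) (w : Fin k → Fin (k + 1) → ℝ) :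
    Matrix.det (Matrix.of fun a b : Fin (k + 1) => ∑ z, c a z * w z b) = 0 := by
  classical
  have hM : (Matrix.of fun a b : Fin (k + 1) => ∑ z, c a z * w z b) =
      fun a => ∑ z, c a z • w z := by
    funext a b
    simp [Finset.sum_apply]
  show Matrix.detRowAlternating _ = 0
  rw [hM]
  have := (Matrix.detRowAlternating (n := Fin (k + 1)) (R := ℝ)).toMultilinearMap.map_sum
    (α := fun _ => Fin k) (g := fun a z => c a z • w z)
  simp only [AlternatingMap.coe_multilinearMap] at this
  rw [this]
  refine Finset.sum_eq_zero fun r _ => ?_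
  have hsmul := (Matrix.detRowAlternating (n := Fin (k + 1)) (R := ℝ)).toMultilinearMap.map_smul_univ
    (fun a => c a (r a)) (fun a => w (r a))
  simp only [AlternatingMap.coe_multilinearMap] at hsmul
  rw [hsmul]
  have hnotinj : ¬ Function.Injective (fun a => w (r a)) := by
    obtain ⟨a, a', hne, heq⟩ := Fintype.exists_ne_map_eq_of_card_lt r (by simp)
    intro hinj
    exact hne (hinj (show w (r a) = w (r a') by rw [heq]))
  rw [Matrix.detRowAlternating.map_eq_zero_of_not_injective _ hnotinj, smul_zero]

lemma liftSimplex_const (k : ℕ) (hk : 1 ≤ k) (i : Fin k) :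
    liftSimplex k (fun _ => (k : ℝ)⁻¹) i = (k : ℝ)⁻¹ := by
  have hk0 : (k : ℝ) ≠ 0 := Nat.cast_ne_zero.mpr (by omega)
  rw [liftSimplex]
  split
  · rfl
  · rw [Finset.sum_const, card_univ, Fintype.card_fin, nsmul_eq_mul]
    have h1 : ((k - 1 : ℕ) : ℝ) = (k : ℝ) - 1 := by
      rw [Nat.cast_sub hk, Nat.cast_one]
    rw [h1]
    field_simp
    ring

lemma liftSimplex_ind (n : ℕ) (x : ℕ) (hx : x < n) (y : Fin n) :
    liftSimplex n (fun j => if (j : ℕ) = x then 1 else 0) y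
      = if (y : ℕ) = x then 1 else 0 := by
  rw [liftSimplex]
  by_cases h : (y : ℕ) < n - 1
  · rw [dif_pos h]
  · rw [dif_neg h]
    have hy : (y : ℕ) = n - 1 := by
      have := y.isLt; omega
    by_cases hx1 : x < n - 1
    · have hrw : ∀ j : Fin (n - 1), (if (j : ℕ) = x then (1 : ℝ) else 0) =
          if j = ⟨x, hx1⟩ then 1 else 0 := fun j => by simp [Fin.ext_iff]
      simp_rw [hrw]
      rw [Finset.sum_ite_eq' Finset.univ]
      have hne : ¬((y : ℕ) = x) := by omega
      simp [hne]
    · have hsum : (∑ j : Fin (n - 1), if ((j : Fin (n-1)) : ℕ) = x then (1 : ℝ) else 0) = 0 := by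
        refine Finset.sum_eq_zero fun j _ => ?_
        have hj : ¬((j : ℕ) = x) := by
          have := j.isLt; omega
        simp [hj]
      rw [hsum]
      have heq : (y : ℕ) = x := by omega
      simp [heq]

lemma measurable_liftSimplex_comp {α : Type*} [MeasurableSpace α] (n : ℕ)
    (g : α → Fin (n - 1) → ℝ) (hg : Measurable g) (i : Fin n) :
    Measurable fun θ => liftSimplex n (g θ) i := by
  by_cases h : (i : ℕ) < n - 1
  · simp only [liftSimplex, dif_pos h]
    exact (measurable_pi_apply _).comp hg
  · simp only [liftSimplex, dif_neg h]
    exact measurable_const.sub (Finset.measurable_sum _ fun j _ =>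
      (measurable_pi_apply _).comp hg)



lemma measurable_trianglePMF (m n k : ℕ) (x : Fin m) (y : Fin n) :
    Measurable fun θ : (Fin (k - 1) → ℝ) × (Fin k → Fin (m - 1) → ℝ) ×
      (Fin k → Fin m → Fin (n - 1) → ℝ) => trianglePMF m n k θ x y := by
  unfold trianglePMF
  refine Finset.measurable_sum _ fun i _ => ?_
  refine Measurable.mul (Measurable.mul ?_ ?_) ?_
  · exact measurable_liftSimplex_comp k _ measurable_fst i
  · exact measurable_liftSimplex_comp m _
      ((measurable_pi_apply i).comp (measurable_fst.comp measurable_snd)) x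
  · exact measurable_liftSimplex_comp n _
      ((measurable_pi_apply x).comp ((measurable_pi_apply i).comp
        (measurable_snd.comp measurable_snd))) y

lemma measurable_detF (m n k : ℕ) (hkm : k + 1 ≤ m) (hkn : k + 1 ≤ n) :
    Measurable fun θ : (Fin (k - 1) → ℝ) × (Fin k → Fin (m - 1) → ℝ) ×
      (Fin k → Fin m → Fin (n - 1) → ℝ) =>
      Matrix.det (Matrix.of fun a b : Fin (k + 1) =>
        trianglePMF m n k θ (Fin.castLE hkm a) (Fin.castLE hkn b)) := by
  have hrw : (fun θ : (Fin (k - 1) → ℝ) × (Fin k → Fin (m - 1) → ℝ) ×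
      (Fin k → Fin m → Fin (n - 1) → ℝ) =>
      Matrix.det (Matrix.of fun a b : Fin (k + 1) =>
        trianglePMF m n k θ (Fin.castLE hkm a) (Fin.castLE hkn b))) =
      fun θ => ∑ σ : Equiv.Perm (Fin (k + 1)), Equiv.Perm.sign σ •
        ∏ a, trianglePMF m n k θ (Fin.castLE hkm (σ a)) (Fin.castLE hkn a) := by
    funext θ
    rw [Matrix.det_apply]
    rfl
  rw [hrw]
  refine Finset.measurable_sum _ fun σ _ => ?_
  exact (Finset.measurable_prod _ fun a _ => measurable_trianglePMF m n k _ _).const_smul _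

lemma ci_det_zero {m n k : ℕ} (hkm : k + 1 ≤ m) (hkn : k + 1 ≤ n)
    (p : Fin m → Fin n → ℝ) (q : Fin m → Fin n → Fin k → ℝ) (h : IsCIExtension p q) :
    Matrix.det (Matrix.of fun a b : Fin (k + 1) =>
      p (Fin.castLE hkm a) (Fin.castLE hkn b)) = 0 := by
  classical
  obtain ⟨hpos, hsum, hci⟩ := h
  set u : Fin m → Fin k → ℝ := fun x z =>
    if (∑ x', ∑ y', q x' y' z) = 0 then 0 else (∑ y', q x y' z) / (∑ x', ∑ y', q x' y' z)
    with hu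
  set w : Fin k → Fin n → ℝ := fun z y => ∑ x', q x' y z with hw
  have hq : ∀ x y z, q x y z = u x z * w z y := by
    intro x y z
    by_cases hS : (∑ x', ∑ y', q x' y' z) = 0
    · simp only [hu, if_pos hS]
      have h2 := (Finset.sum_eq_zero_iff_of_nonneg fun x' _ =>
        Finset.sum_nonneg fun y' _ => hpos x' y' z).mp hS x (Finset.mem_univ x)
      have h3 := (Finset.sum_eq_zero_iff_of_nonneg fun y' _ => hpos x y' z).mp h2 y
        (Finset.mem_univ y)
      rw [h3, zero_mul]
    · simp only [hu, if_neg hS]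
      rw [div_mul_eq_mul_div, eq_div_iff hS]
      exact hci x y z
  have hM : (Matrix.of fun a b : Fin (k + 1) => p (Fin.castLE hkm a) (Fin.castLE hkn b)) =
      Matrix.of fun a b : Fin (k + 1) =>
        ∑ z, (fun a z => u (Fin.castLE hkm a) z) a z *
          (fun z b => w z (Fin.castLE hkn b)) z b := by
    ext a b
    simp only [Matrix.of_apply]
    rw [← hsum]
    exact Finset.sum_congr rfl fun z _ => hq _ _ z
  rw [hM]
  exact det_sum_rank_one _ _

/-- index type for flattened triangle parameters -/
abbrev auxIdx (m n k : ℕ) : Type :=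
  Fin (k - 1) ⊕ (Fin k × Fin (m - 1)) ⊕ (Fin k × Fin m × Fin (n - 1))

/-- flattening inverse: from coordinates to parameter tuple -/
def auxPsi (m n k : ℕ) (x : auxIdx m n k → ℝ) :
    (Fin (k - 1) → ℝ) × (Fin k → Fin (m - 1) → ℝ) × (Fin k → Fin m → Fin (n - 1) → ℝ) :=
  ⟨fun j => x (.inl j), fun i j => x (.inr (.inl (i, j))), fun i a j => x (.inr (.inr (i, a, j)))⟩

noncomputable def auxPZ (m n k : ℕ) (i : Fin k) : MvPolynomial (auxIdx m n k) ℝ :=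
  if h : (i : ℕ) < k - 1 then MvPolynomial.X (.inl ⟨i, h⟩)
  else 1 - ∑ j, MvPolynomial.X (.inl j)

noncomputable def auxPX (m n k : ℕ) (i : Fin k) (a : Fin m) : MvPolynomial (auxIdx m n k) ℝ :=
  if h : (a : ℕ) < m - 1 then MvPolynomial.X (.inr (.inl (i, ⟨a, h⟩)))
  else 1 - ∑ j, MvPolynomial.X (.inr (.inl (i, j)))

noncomputable def auxPY (m n k : ℕ) (i : Fin k) (a : Fin m) (b : Fin n) :
    MvPolynomial (auxIdx m n k) ℝ :=
  if h : (b : ℕ) < n - 1 then MvPolynomial.X (.inr (.inr (i, a, ⟨b, h⟩)))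
  else 1 - ∑ j, MvPolynomial.X (.inr (.inr (i, a, j)))

noncomputable def auxP (m n k : ℕ) (hkm : k + 1 ≤ m) (hkn : k + 1 ≤ n) :
    MvPolynomial (auxIdx m n k) ℝ :=
  Matrix.det (Matrix.of fun a b : Fin (k + 1) =>
    ∑ i, auxPZ m n k i * auxPX m n k i (Fin.castLE hkm a) *
      auxPY m n k i (Fin.castLE hkm a) (Fin.castLE hkn b))

lemma auxP_eval (m n k : ℕ) (hkm : k + 1 ≤ m) (hkn : k + 1 ≤ n) (x : auxIdx m n k → ℝ) :
    MvPolynomial.eval x (auxP m n k hkm hkn) =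
      Matrix.det (Matrix.of fun a b : Fin (k + 1) =>
        trianglePMF m n k (auxPsi m n k x) (Fin.castLE hkm a) (Fin.castLE hkn b)) := by
  rw [auxP, RingHom.map_det]
  congr 1
  ext a b
  simp only [RingHom.mapMatrix_apply, Matrix.map_apply, Matrix.of_apply, trianglePMF]
  rw [map_sum]
  refine Finset.sum_congr rfl fun i _ => ?_
  rw [map_mul, map_mul]
  have hZ : MvPolynomial.eval x (auxPZ m n k i) = liftSimplex k (auxPsi m n k x).1 i := by
    rw [auxPZ, liftSimplex]
    split <;> simp [auxPsi]
  have hX : MvPolynomial.eval x (auxPX m n k i (Fin.castLE hkm a)) =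
      liftSimplex m ((auxPsi m n k x).2.1 i) (Fin.castLE hkm a) := by
    rw [auxPX, liftSimplex]
    split <;> simp [auxPsi]
  have hY : MvPolynomial.eval x (auxPY m n k i (Fin.castLE hkm a) (Fin.castLE hkn b)) =
      liftSimplex n ((auxPsi m n k x).2.2 i (Fin.castLE hkm a)) (Fin.castLE hkn b) := by
    rw [auxPY, liftSimplex]
    split <;> simp [auxPsi]
  rw [hZ, hX, hY]

lemma auxPsi_measurePreserving (m n k : ℕ) :
    MeasurePreserving (auxPsi m n k) volume volume := by
  have h1 := volume_measurePreserving_sumPiEquivProdPi (fun _ : auxIdx m n k => ℝ)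
  have h2 := volume_measurePreserving_sumPiEquivProdPi
    (fun _ : (Fin k × Fin (m - 1)) ⊕ (Fin k × Fin m × Fin (n - 1)) => ℝ)
  have hc2 : MeasurePreserving
      (fun (f : Fin k × Fin (m - 1) → ℝ) (a : Fin k) (b : Fin (m - 1)) => f (a, b))
      volume volume := measurePreserving_curry' _ _ _ volume
  have hc3a : MeasurePreserving
      (fun (f : Fin k × (Fin m × Fin (n - 1)) → ℝ) (i : Fin k) (p : Fin m × Fin (n - 1)) =>
        f (i, p)) volume volume := measurePreserving_curry' _ _ _ volume
  have hc3in : MeasurePreserving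
      (fun (g : Fin m × Fin (n - 1) → ℝ) (a : Fin m) (b : Fin (n - 1)) => g (a, b))
      volume volume := measurePreserving_curry' _ _ _ volume
  have hc3b : MeasurePreserving
      (fun (f : Fin k → Fin m × Fin (n - 1) → ℝ) (i : Fin k) => (fun a b => f i (a, b)))
      volume volume :=
    measurePreserving_piCongrRight' (fun _ (g : Fin m × Fin (n - 1) → ℝ) (a : Fin m) (b : Fin (n - 1)) => g (a, b)) (fun _ => hc3in.measurable)
      (fun _ => volume) (fun _ => volume) (fun _ => hc3in)
  have hc3 := hc3b.comp hc3a
  have hB := (MeasurePreserving.id (volume : Measure (Fin (k - 1) → ℝ))).prod (hc2.prod hc3)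
  have hA := (MeasurePreserving.id (volume : Measure (Fin (k - 1) → ℝ))).prod h2
  exact (hB.comp hA).comp h1

/-- the witness parameter point -/
noncomputable def auxTheta (m n k : ℕ) :
    (Fin (k - 1) → ℝ) × (Fin k → Fin (m - 1) → ℝ) × (Fin k → Fin m → Fin (n - 1) → ℝ) :=
  ⟨fun _ => (k : ℝ)⁻¹, fun _ _ => (m : ℝ)⁻¹, fun _ a j => if (j : ℕ) = (a : ℕ) then 1 else 0⟩

lemma witness_det (m n k : ℕ) (hk : 1 ≤ k) (hkm : k + 1 ≤ m) (hkn : k + 1 ≤ n) :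
    Matrix.det (Matrix.of fun a b : Fin (k + 1) =>
      trianglePMF m n k (auxTheta m n k) (Fin.castLE hkm a) (Fin.castLE hkn b)) ≠ 0 := by
  have hm0 : (m : ℝ) ≠ 0 := Nat.cast_ne_zero.mpr (by omega)
  have hk0 : (k : ℝ) ≠ 0 := Nat.cast_ne_zero.mpr (by omega)
  have hentry : ∀ a b : Fin (k + 1),
      trianglePMF m n k (auxTheta m n k) (Fin.castLE hkm a) (Fin.castLE hkn b) =
        (m : ℝ)⁻¹ * (if (b : ℕ) = (a : ℕ) then 1 else 0) := by
    intro a b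
    unfold trianglePMF auxTheta
    have hterm : ∀ i : Fin k,
        liftSimplex k (fun _ => (k : ℝ)⁻¹) i * liftSimplex m (fun _ => (m : ℝ)⁻¹)
            (Fin.castLE hkm a) *
          liftSimplex n (fun j => if (j : ℕ) = ((Fin.castLE hkm a : Fin m) : ℕ) then 1 else 0)
            (Fin.castLE hkn b) =
        (k : ℝ)⁻¹ * ((m : ℝ)⁻¹ * (if (b : ℕ) = (a : ℕ) then 1 else 0)) := by
      intro i
      rw [liftSimplex_const k hk, liftSimplex_const m (by omega),
        liftSimplex_ind n _ (by simp only [Fin.coe_castLE]; omega)]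
      simp only [Fin.coe_castLE]
      ring
    simp only [hterm]
    rw [Finset.sum_const, card_univ, Fintype.card_fin, nsmul_eq_mul]
    field_simp
  have hdiag : (Matrix.of fun a b : Fin (k + 1) =>
      trianglePMF m n k (auxTheta m n k) (Fin.castLE hkm a) (Fin.castLE hkn b)) =
      Matrix.diagonal (fun _ : Fin (k + 1) => (m : ℝ)⁻¹) := by
    ext a b
    rw [Matrix.of_apply, hentry]
    by_cases hab : a = b
    · subst hab
      simp [Matrix.diagonal]
    · have hne : ¬((b : ℕ) = (a : ℕ)) := fun hh => hab (Fin.ext hh.symm)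
      simp [Matrix.diagonal, hne, hab]
  rw [hdiag, Matrix.det_diagonal, Finset.prod_const]
  exact pow_ne_zero _ (inv_ne_zero hm0)

end AuxHelpers

/-- **Identifiability, Theorem 3.** For `1 ≤ k < min{m, n}`, Lebesgue-almost
every parameter tuple of the triangle graph yields a joint pmf `p` on `Fin m × Fin n` admitting
no conditionally independent extension with latent cardinality `k`. -/
theorem triangle_no_ci_extension_ae (m n k : ℕ)
    (hk : 1 ≤ k) (hkm : k < m) (hkn : k < n) :
    volume {θ : (Fin (k - 1) → ℝ) × (Fin k → Fin (m - 1) → ℝ) ×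
        (Fin k → Fin m → Fin (n - 1) → ℝ) |
      InTriangleParams m n k θ ∧
      ∃ q : Fin m → Fin n → Fin k → ℝ, IsCIExtension (trianglePMF m n k θ) q} = 0 := by
  classical
  have hkm' : k + 1 ≤ m := hkm
  have hkn' : k + 1 ≤ n := hkn
  set F : (Fin (k - 1) → ℝ) × (Fin k → Fin (m - 1) → ℝ) ×
      (Fin k → Fin m → Fin (n - 1) → ℝ) → ℝ := fun θ =>
    Matrix.det (Matrix.of fun a b : Fin (k + 1) =>
      trianglePMF m n k θ (Fin.castLE hkm' a) (Fin.castLE hkn' b)) with hF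
  have hsub : {θ : (Fin (k - 1) → ℝ) × (Fin k → Fin (m - 1) → ℝ) ×
        (Fin k → Fin m → Fin (n - 1) → ℝ) |
      InTriangleParams m n k θ ∧
      ∃ q : Fin m → Fin n → Fin k → ℝ, IsCIExtension (trianglePMF m n k θ) q}
      ⊆ {θ | F θ = 0} := by
    rintro θ ⟨-, q, hq⟩
    exact ci_det_zero hkm' hkn' _ q hq
  refine measure_mono_null hsub ?_
  set x₀ : auxIdx m n k → ℝ := Sum.elim (fun _ => (k : ℝ)⁻¹)
    (Sum.elim (fun _ => (m : ℝ)⁻¹) (fun s => if (s.2.2 : ℕ) = (s.2.1 : ℕ) then 1 else 0))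
    with hx₀
  have hPsi0 : auxPsi m n k x₀ = auxTheta m n k := rfl
  have hPne : auxP m n k hkm' hkn' ≠ 0 := by
    intro h0
    have hev := auxP_eval m n k hkm' hkn' x₀
    rw [h0, map_zero, hPsi0] at hev
    exact witness_det m n k hk hkm' hkn' hev.symm
  have hFmeas : MeasurableSet {θ : (Fin (k - 1) → ℝ) × (Fin k → Fin (m - 1) → ℝ) ×
      (Fin k → Fin m → Fin (n - 1) → ℝ) | F θ = 0} :=
    (measurable_detF m n k hkm' hkn') (measurableSet_singleton 0)
  rw [← (auxPsi_measurePreserving m n k).measure_preimage hFmeas.nullMeasurableSet]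
  have hpre : auxPsi m n k ⁻¹' {θ | F θ = 0} =
      {x : auxIdx m n k → ℝ | MvPolynomial.eval x (auxP m n k hkm' hkn') = 0} := by
    ext x
    simp only [Set.mem_preimage, Set.mem_setOf_eq, hF, auxP_eval]
  rw [hpre]
  exact mvpoly_zero_null_fintype _ hPne
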